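/- For integers a ≥ 2 and b ≥ 3, the matrix K(a,b) := J_a ⊗ (J_b − 2I_b) + I_{ab} is a Seidel matrix of order ab whose spectrum is {1−2a with multiplicity b−1, 1 with multiplicity ab−b, ab−2a+1 with multiplicity 1}; in particular K(a,b) has exactly three distinct eigenvalues, and consequently Seidel matrices of order n with exactly three distinct eigenvalues exist for every composite order n = ab with a ≥ 2 and b ≥ 3. -/

import Mathlib

open Polynomial

/-- A Seidel matrix: a real symmetric matrix with zero diagonal and all off-diagonal
entries equal to `±1`. -/
def IsSeidel {m : Type*} (S : Matrix m m ℝ) : Prop :=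
  S.IsSymm ∧ (∀ i, S i i = 0) ∧ ∀ i j, i ≠ j → S i j = 1 ∨ S i j = -1

/-- The matrix `K(a,b) := J_a ⊗ (J_b − 2 I_b) + I_{ab}`. -/
def Kab (a b : ℕ) : Matrix (Fin a × Fin b) (Fin a × Fin b) ℝ :=
  Matrix.kroneckerMap (· * ·) (Matrix.of fun (_ _ : Fin a) => (1 : ℝ))
    ((Matrix.of fun (_ _ : Fin b) => (1 : ℝ)) - 2 • 1) + 1

open Matrix Finset

section Guts
variable (a b : ℕ)

noncomputable def Jm : Matrix (Fin a × Fin b) (Fin a × Fin b) ℝ := Matrix.of fun _ _ => 1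
noncomputable def Em : Matrix (Fin a × Fin b) (Fin a × Fin b) ℝ :=
  Matrix.of fun p q => if p.2 = q.2 then 1 else 0

lemma hKform : Kab a b = Jm a b - (2:ℝ) • Em a b + 1 := by
  ext ⟨i,j⟩ ⟨k,l⟩
  simp only [Kab, Jm, Em, Matrix.kroneckerMap_apply, Matrix.add_apply, Matrix.sub_apply,
    Matrix.smul_apply, Matrix.of_apply, Matrix.one_apply, smul_ite, Prod.mk.injEq]
  by_cases h1 : j = l <;> by_cases h2 : i = k <;> simp [h1, h2]

lemma hJJ : Jm a b * Jm a b = ((a:ℝ) * b) • Jm a b := by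
  ext p q
  simp [Jm, Matrix.mul_apply, Finset.card_univ, mul_comm]

lemma hJE : Jm a b * Em a b = (a:ℝ) • Jm a b := by
  ext p q
  rw [Matrix.mul_apply, Fintype.sum_prod_type]
  simp [Jm, Em, Finset.sum_ite_eq']

lemma hEJ : Em a b * Jm a b = (a:ℝ) • Jm a b := by
  ext p q
  rw [Matrix.mul_apply, Fintype.sum_prod_type]
  simp [Jm, Em, Finset.sum_ite_eq]

lemma hEE : Em a b * Em a b = (a:ℝ) • Em a b := by
  ext p q
  simp only [Em, Matrix.mul_apply, Matrix.of_apply, Matrix.smul_apply, ite_mul, one_mul, zero_mul,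
    Fintype.sum_prod_type, smul_eq_mul]
  by_cases h : p.2 = q.2 <;> simp [h, Finset.sum_ite_eq]

lemma trJ : (Jm a b).trace = (a:ℝ)*b := by
  simp [Matrix.trace, Matrix.diag, Jm, Finset.card_univ]

lemma trE : (Em a b).trace = (a:ℝ)*b := by
  simp [Matrix.trace, Matrix.diag, Em, Finset.card_univ]

lemma trOne : (1 : Matrix (Fin a × Fin b) (Fin a × Fin b) ℝ).trace = (a:ℝ)*b := by
  rw [Matrix.trace_one]
  simp

lemma hAnn : (Kab a b - ((1:ℝ) - 2*a) • 1) * (Kab a b - (1:ℝ) • 1) *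
    (Kab a b - ((a:ℝ)*b - 2*a + 1) • 1) = 0 := by
  rw [hKform]
  simp only [mul_sub, sub_mul, mul_add, add_mul, smul_mul_assoc, mul_smul_comm, one_mul,
    mul_one, hJJ, hJE, hEJ, hEE, smul_smul]
  module

lemma hKK : Kab a b * Kab a b =
    ((a:ℝ)*b - 4*a + 2) • Jm a b + ((4:ℝ)*a - 4) • Em a b + 1 := by
  rw [hKform]
  simp only [mul_sub, sub_mul, mul_add, add_mul, smul_mul_assoc, mul_smul_comm, one_mul,
    mul_one, hJJ, hJE, hEJ, hEE, smul_smul]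
  module

lemma trK : (Kab a b).trace = 0 := by
  rw [hKform]
  simp only [Matrix.trace_add, Matrix.trace_sub, Matrix.trace_smul, trJ, trE, trOne,
    smul_eq_mul]
  ring

lemma trKK : (Kab a b * Kab a b).trace = ((a:ℝ)*b) * ((a:ℝ)*b - 1) := by
  rw [hKK]
  simp only [Matrix.trace_add, Matrix.trace_smul, trJ, trE, trOne, smul_eq_mul]
  ring

lemma hSymm : (Kab a b).IsSymm := by
  rw [hKform]
  ext p q
  simp only [Matrix.transpose_apply, Matrix.add_apply, Matrix.sub_apply, Matrix.smul_apply,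
    Jm, Em, Matrix.of_apply, Matrix.one_apply]
  by_cases h1 : p.2 = q.2 <;> by_cases h2 : p = q <;>
    simp [h1, h2, eq_comm]

lemma hHerm : (Kab a b).IsHermitian := by
  rw [Matrix.IsHermitian, Matrix.conjTranspose_eq_transpose_of_trivial]
  exact hSymm a b

end Guts


section Aux
variable {ι : Type*} [Fintype ι] [DecidableEq ι]

lemma my_charpoly_diagonal (d : ι → ℝ) :
    (Matrix.diagonal d).charpoly = ∏ i, (X - C (d i)) := by
  have h : charmatrix (Matrix.diagonal d) = Matrix.diagonal fun i => X - C (d i) := by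
    ext i j
    by_cases hij : i = j
    · subst hij; simp
    · simp [charmatrix_apply_ne _ _ _ hij, Matrix.diagonal_apply_ne _ hij]
  rw [Matrix.charpoly, h, Matrix.det_diagonal]

lemma my_charpoly_conj (V D : Matrix ι ι ℝ) (hV : V * star V = 1) :
    (V * D * star V).charpoly = D.charpoly := by
  let mC : Matrix ι ι ℝ →+* Matrix ι ι ℝ[X] := (C : ℝ →+* ℝ[X]).mapMatrix
  have hmul : mC V * mC (star V) = 1 := by
    rw [← _root_.map_mul mC, hV, _root_.map_one mC]
  have hcomm : Matrix.scalar ι (X : ℝ[X]) * mC V = mC V * Matrix.scalar ι (X : ℝ[X]) :=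
    (Matrix.scalar_commute (X : ℝ[X]) (fun r => Commute.all _ _) (mC V))
  have key : mC V * Matrix.scalar ι (X : ℝ[X]) * mC (star V) = Matrix.scalar ι (X : ℝ[X]) := by
    rw [← hcomm, mul_assoc, hmul, mul_one]
  have h : charmatrix (V * D * star V) = mC V * charmatrix D * mC (star V) := by
    show Matrix.scalar ι (X : ℝ[X]) - mC (V * D * star V) = _
    have hD : charmatrix D = Matrix.scalar ι (X : ℝ[X]) - mC D := rfl
    rw [_root_.map_mul mC, _root_.map_mul mC, hD, mul_sub, sub_mul, key]
  rw [Matrix.charpoly, h, Matrix.det_mul, Matrix.det_mul, Matrix.charpoly,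
    mul_comm (Matrix.det (mC V)), mul_assoc, ← Matrix.det_mul, hmul, Matrix.det_one, mul_one]

lemma my_herm_charpoly (A : Matrix ι ι ℝ) (hA : A.IsHermitian) :
    A.charpoly = ∏ i, (X - C (hA.eigenvalues i)) := by
  have hV : (hA.eigenvectorUnitary : Matrix ι ι ℝ) * star (hA.eigenvectorUnitary : Matrix ι ι ℝ) = 1 :=
    (Matrix.mem_unitaryGroup_iff).mp hA.eigenvectorUnitary.2
  have hspec := hA.spectral_theorem
  calc A.charpoly
      = ((hA.eigenvectorUnitary : Matrix ι ι ℝ) * Matrix.diagonal (RCLike.ofReal ∘ hA.eigenvalues)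
          * star (hA.eigenvectorUnitary : Matrix ι ι ℝ)).charpoly := by conv_lhs => rw [hspec, Unitary.conjStarAlgAut_apply]
    _ = (Matrix.diagonal (RCLike.ofReal ∘ hA.eigenvalues)).charpoly := my_charpoly_conj _ _ hV
    _ = ∏ i, (X - C (hA.eigenvalues i)) := by
        rw [my_charpoly_diagonal]
        simp

lemma my_trace_conj (V D : Matrix ι ι ℝ) (hV : star V * V = 1) :
    (V * D * star V).trace = D.trace := by
  rw [Matrix.trace_mul_comm, ← mul_assoc, hV, one_mul]

lemma my_herm_trace (A : Matrix ι ι ℝ) (hA : A.IsHermitian) :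
    A.trace = ∑ i, hA.eigenvalues i := by
  have hV : star (hA.eigenvectorUnitary : Matrix ι ι ℝ) * (hA.eigenvectorUnitary : Matrix ι ι ℝ) = 1 :=
    (Matrix.mem_unitaryGroup_iff').mp hA.eigenvectorUnitary.2
  conv_lhs => rw [hA.spectral_theorem, Unitary.conjStarAlgAut_apply]
  rw [my_trace_conj _ _ hV, Matrix.trace_diagonal]
  simp

lemma my_herm_trace_sq (A : Matrix ι ι ℝ) (hA : A.IsHermitian) :
    (A * A).trace = ∑ i, hA.eigenvalues i ^ 2 := by
  have hV : star (hA.eigenvectorUnitary : Matrix ι ι ℝ) * (hA.eigenvectorUnitary : Matrix ι ι ℝ) = 1 :=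
    (Matrix.mem_unitaryGroup_iff').mp hA.eigenvectorUnitary.2
  have hAA : A * A = (hA.eigenvectorUnitary : Matrix ι ι ℝ) *
      (Matrix.diagonal (RCLike.ofReal ∘ hA.eigenvalues) * Matrix.diagonal (RCLike.ofReal ∘ hA.eigenvalues))
      * star (hA.eigenvectorUnitary : Matrix ι ι ℝ) := by
    conv_lhs => rw [hA.spectral_theorem, Unitary.conjStarAlgAut_apply]
    rw [show ∀ (U W : Matrix ι ι ℝ), U * W * star U * (U * W * star U) = U * (W * (star U * U) * W) * star U from fun U W => by noncomm_ring, hV]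
    noncomm_ring
  rw [hAA, my_trace_conj _ _ hV, Matrix.diagonal_mul_diagonal, Matrix.trace_diagonal]
  simp [sq]

lemma my_eig_mem (A : Matrix ι ι ℝ) (hA : A.IsHermitian) (c1 c2 c3 : ℝ)
    (h : (A - c1 • 1) * (A - c2 • 1) * (A - c3 • 1) = 0) (i : ι) :
    hA.eigenvalues i = c1 ∨ hA.eigenvalues i = c2 ∨ hA.eigenvalues i = c3 := by
  set v : ι → ℝ := ⇑(hA.eigenvectorBasis i) with hv
  have hv0 : v ≠ 0 := by
    intro h0
    apply hA.eigenvectorBasis.orthonormal.ne_zero i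
    ext j
    exact congrFun h0 j
  have hstep : ∀ c : ℝ, (A - c • 1) *ᵥ v = (hA.eigenvalues i - c) • v := by
    intro c
    rw [Matrix.sub_mulVec, hA.mulVec_eigenvectorBasis, Matrix.smul_mulVec,
      Matrix.one_mulVec, sub_smul]
  have h0 : ((A - c1 • 1) * ((A - c2 • 1) * (A - c3 • 1))) *ᵥ v = 0 := by
    rw [← mul_assoc, h, Matrix.zero_mulVec]
  rw [← Matrix.mulVec_mulVec, ← Matrix.mulVec_mulVec, hstep c3, Matrix.mulVec_smul, hstep c2,
    Matrix.mulVec_smul, Matrix.mulVec_smul, hstep c1, smul_smul, smul_smul] at h0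
  rcases smul_eq_zero.mp h0 with hc | hc
  · rcases mul_eq_zero.mp hc with hc | hc
    · rcases mul_eq_zero.mp hc with hc | hc
      · exact Or.inr (Or.inr (sub_eq_zero.mp hc))
      · exact Or.inr (Or.inl (sub_eq_zero.mp hc))
    · exact Or.inl (sub_eq_zero.mp hc)
  · exact absurd hc hv0

lemma three_val_sum (e : ι → ℝ) (c1 c2 c3 : ℝ)
    (he : ∀ i, e i = c1 ∨ e i = c2 ∨ e i = c3)
    (h12 : c1 ≠ c2) (h13 : c1 ≠ c3) (h23 : c2 ≠ c3) (g : ℝ → ℝ) :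
    ∑ i, g (e i) =
      (Finset.univ.filter (fun i => e i = c1)).card * g c1 +
      (Finset.univ.filter (fun i => e i = c2)).card * g c2 +
      (Finset.univ.filter (fun i => e i = c3)).card * g c3 := by
  set s1 := Finset.univ.filter (fun i => e i = c1) with hs1
  set s2 := Finset.univ.filter (fun i => e i = c2) with hs2
  set s3 := Finset.univ.filter (fun i => e i = c3) with hs3
  have hd12 : Disjoint s1 s2 := by
    rw [Finset.disjoint_left]
    intro i hi1 hi2
    rw [hs1, Finset.mem_filter] at hi1
    rw [hs2, Finset.mem_filter] at hi2
    exact h12 (hi1.2 ▸ hi2.2)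
  have hd13 : Disjoint s1 s3 := by
    rw [Finset.disjoint_left]
    intro i hi1 hi2
    rw [hs1, Finset.mem_filter] at hi1
    rw [hs3, Finset.mem_filter] at hi2
    exact h13 (hi1.2 ▸ hi2.2)
  have hd23 : Disjoint s2 s3 := by
    rw [Finset.disjoint_left]
    intro i hi1 hi2
    rw [hs2, Finset.mem_filter] at hi1
    rw [hs3, Finset.mem_filter] at hi2
    exact h23 (hi1.2 ▸ hi2.2)
  have hu : s1 ∪ s2 ∪ s3 = Finset.univ := by
    ext i
    simp only [hs1, hs2, hs3, Finset.mem_union, Finset.mem_filter, Finset.mem_univ, true_and,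
      iff_true]
    rcases he i with h | h | h
    · exact Or.inl (Or.inl h)
    · exact Or.inl (Or.inr h)
    · exact Or.inr h
  have key : ∀ (s : Finset ι) (c : ℝ), (∀ i ∈ s, e i = c) →
      ∑ i ∈ s, g (e i) = s.card * g c := by
    intro s c hc
    rw [Finset.sum_congr rfl (fun i hi => by rw [hc i hi]), Finset.sum_const, nsmul_eq_mul]
  calc ∑ i, g (e i) = ∑ i ∈ s1 ∪ s2 ∪ s3, g (e i) := by rw [hu]
    _ = _ := by
        rw [Finset.sum_union (Finset.disjoint_union_left.mpr ⟨hd13, hd23⟩),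
          Finset.sum_union hd12,
          key s1 c1 (fun i hi => (Finset.mem_filter.mp hi).2),
          key s2 c2 (fun i hi => (Finset.mem_filter.mp hi).2),
          key s3 c3 (fun i hi => (Finset.mem_filter.mp hi).2)]

lemma three_val_prod (e : ι → ℝ) (c1 c2 c3 : ℝ)
    (he : ∀ i, e i = c1 ∨ e i = c2 ∨ e i = c3)
    (h12 : c1 ≠ c2) (h13 : c1 ≠ c3) (h23 : c2 ≠ c3) :
    ∏ i, (X - C (e i)) =
      (X - C c1) ^ (Finset.univ.filter (fun i => e i = c1)).card *
      (X - C c2) ^ (Finset.univ.filter (fun i => e i = c2)).card *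
      (X - C c3) ^ (Finset.univ.filter (fun i => e i = c3)).card := by
  set s1 := Finset.univ.filter (fun i => e i = c1) with hs1
  set s2 := Finset.univ.filter (fun i => e i = c2) with hs2
  set s3 := Finset.univ.filter (fun i => e i = c3) with hs3
  have hd12 : Disjoint s1 s2 := by
    rw [Finset.disjoint_left]
    intro i hi1 hi2
    rw [hs1, Finset.mem_filter] at hi1
    rw [hs2, Finset.mem_filter] at hi2
    exact h12 (hi1.2 ▸ hi2.2)
  have hd13 : Disjoint s1 s3 := by
    rw [Finset.disjoint_left]
    intro i hi1 hi2
    rw [hs1, Finset.mem_filter] at hi1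
    rw [hs3, Finset.mem_filter] at hi2
    exact h13 (hi1.2 ▸ hi2.2)
  have hd23 : Disjoint s2 s3 := by
    rw [Finset.disjoint_left]
    intro i hi1 hi2
    rw [hs2, Finset.mem_filter] at hi1
    rw [hs3, Finset.mem_filter] at hi2
    exact h23 (hi1.2 ▸ hi2.2)
  have hu : s1 ∪ s2 ∪ s3 = Finset.univ := by
    ext i
    simp only [hs1, hs2, hs3, Finset.mem_union, Finset.mem_filter, Finset.mem_univ, true_and,
      iff_true]
    rcases he i with h | h | h
    · exact Or.inl (Or.inl h)
    · exact Or.inl (Or.inr h)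
    · exact Or.inr h
  have key : ∀ (s : Finset ι) (c : ℝ), (∀ i ∈ s, e i = c) →
      ∏ i ∈ s, (X - C (e i)) = (X - C c) ^ s.card := by
    intro s c hc
    rw [Finset.prod_congr rfl (fun i hi => by rw [hc i hi]), Finset.prod_const]
  calc ∏ i, (X - C (e i)) = ∏ i ∈ s1 ∪ s2 ∪ s3, (X - C (e i)) := by rw [hu]
    _ = _ := by
        rw [Finset.prod_union (Finset.disjoint_union_left.mpr ⟨hd13, hd23⟩),
          Finset.prod_union hd12,
          key s1 c1 (fun i hi => (Finset.mem_filter.mp hi).2),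
          key s2 c2 (fun i hi => (Finset.mem_filter.mp hi).2),
          key s3 c3 (fun i hi => (Finset.mem_filter.mp hi).2)]

end Aux


lemma kab_seidel (a b : ℕ) : IsSeidel (Kab a b) := by
  refine ⟨hSymm a b, ?_, ?_⟩
  · intro p
    rw [hKform]
    simp [Jm, Em, Matrix.one_apply]
    norm_num
  · intro p q hpq
    rw [hKform]
    simp only [Matrix.add_apply, Matrix.sub_apply, Matrix.smul_apply, Jm, Em, Matrix.of_apply,
      Matrix.one_apply, if_neg hpq, smul_eq_mul, add_zero]
    by_cases h : p.2 = q.2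
    · right; simp [h]; ring
    · left; simp [h]

lemma kab_charpoly (a b : ℕ) (ha : 2 ≤ a) (hb : 3 ≤ b) :
    (Kab a b).charpoly =
      (X - C (1 - 2 * (a : ℝ))) ^ (b - 1) * (X - C 1) ^ (a * b - b) *
        (X - C ((a : ℝ) * b - 2 * a + 1)) ^ 1 := by
  have ha' : (2:ℝ) ≤ (a:ℝ) := by exact_mod_cast ha
  have hb' : (3:ℝ) ≤ (b:ℝ) := by exact_mod_cast hb
  have h12 : (1 - 2 * (a:ℝ)) ≠ 1 := by nlinarith
  have h13 : (1 - 2 * (a:ℝ)) ≠ ((a:ℝ) * b - 2 * a + 1) := by nlinarith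
  have h23 : (1:ℝ) ≠ ((a:ℝ) * b - 2 * a + 1) := by nlinarith
  have hH := hHerm a b
  have he : ∀ i, hH.eigenvalues i = (1 - 2 * (a:ℝ)) ∨ hH.eigenvalues i = 1 ∨
      hH.eigenvalues i = ((a:ℝ) * b - 2 * a + 1) := by
    intro i
    exact my_eig_mem _ hH _ _ _ (by have := hAnn a b; linear_combination (norm := module) this) i
  set e := hH.eigenvalues with hedef
  set m1 := (Finset.univ.filter (fun i => e i = (1 - 2 * (a:ℝ)))).card with hm1def
  set m2 := (Finset.univ.filter (fun i => e i = (1:ℝ))).card with hm2def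
  set m3 := (Finset.univ.filter (fun i => e i = ((a:ℝ) * b - 2 * a + 1))).card with hm3def
  have E0 : (m1:ℝ) * 1 + (m2:ℝ) * 1 + (m3:ℝ) * 1 = (a:ℝ) * b := by
    rw [← three_val_sum e _ _ _ he h12 h13 h23 (fun _ => 1)]
    simp [Finset.card_univ]
  have E1 : (m1:ℝ) * (1 - 2 * (a:ℝ)) + (m2:ℝ) * 1 + (m3:ℝ) * ((a:ℝ) * b - 2 * a + 1) = 0 := by
    rw [← three_val_sum e _ _ _ he h12 h13 h23 (fun x => x)]
    rw [← my_herm_trace _ hH, trK]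
  have E2 : (m1:ℝ) * (1 - 2 * (a:ℝ))^2 + (m2:ℝ) * 1^2 +
      (m3:ℝ) * ((a:ℝ) * b - 2 * a + 1)^2 = (a:ℝ)*b*((a:ℝ)*b - 1) := by
    rw [← three_val_sum e _ _ _ he h12 h13 h23 (fun x => x^2)]
    rw [← my_herm_trace_sq _ hH, trKK]
  have hm3 : (m3:ℝ) = 1 := by
    have key : (a:ℝ)^2 * b * ((b:ℝ) - 2) * ((m3:ℝ) - 1) = 0 := by
      linear_combination (1 - 2*(a:ℝ)) * E0 + (2*(a:ℝ) - 2) * E1 + E2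
    have hfac : (a:ℝ)^2 * b * ((b:ℝ) - 2) ≠ 0 := ne_of_gt (by nlinarith)
    have := mul_eq_zero.mp key
    rcases this with h | h
    · exact absurd h hfac
    · linarith
  have hm1 : (m1:ℝ) = (b:ℝ) - 1 := by
    have key : (2*(a:ℝ)) * ((m1:ℝ) - ((b:ℝ) - 1)) = 0 := by
      linear_combination E0 - E1 + ((a:ℝ)*((b:ℝ)-2)) * hm3
    have hfac : (2*(a:ℝ)) ≠ 0 := by nlinarith
    rcases mul_eq_zero.mp key with h | h
    · exact absurd h hfac
    · linarith
  have hm2 : (m2:ℝ) = (a:ℝ)*b - b := by linear_combination E0 - hm1 - hm3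
  have hm3n : m3 = 1 := by exact_mod_cast hm3
  have hm1n : m1 = b - 1 := by
    have : (m1:ℝ) = ((b - 1 : ℕ):ℝ) := by
      rw [Nat.cast_sub (by omega)]
      push_cast
      linarith
    exact_mod_cast this
  have hm2n : m2 = a * b - b := by
    have : (m2:ℝ) = ((a * b - b : ℕ):ℝ) := by
      rw [Nat.cast_sub (Nat.le_mul_of_pos_left b (by omega))]
      push_cast
      linarith
    exact_mod_cast this
  rw [my_herm_charpoly _ hH,
    three_val_prod e _ _ _ he h12 h13 h23, ← hm1def, ← hm2def, ← hm3def, hm1n, hm2n, hm3n]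

lemma roots_card_three (a b : ℕ) (ha : 2 ≤ a) (hb : 3 ≤ b) :
    ((X - C (1 - 2 * (a : ℝ))) ^ (b - 1) * (X - C 1) ^ (a * b - b) *
        (X - C ((a : ℝ) * b - 2 * a + 1)) ^ 1).roots.toFinset.card = 3 := by
  have ha' : (2:ℝ) ≤ (a:ℝ) := by exact_mod_cast ha
  have hb' : (3:ℝ) ≤ (b:ℝ) := by exact_mod_cast hb
  have h12 : (1 - 2 * (a:ℝ)) ≠ 1 := by nlinarith
  have h13 : (1 - 2 * (a:ℝ)) ≠ ((a:ℝ) * b - 2 * a + 1) := by nlinarith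
  have h23 : (1:ℝ) ≠ ((a:ℝ) * b - 2 * a + 1) := by nlinarith
  have hb1 : b - 1 ≠ 0 := by omega
  have hab : a * b - b ≠ 0 := by
    have : b < a * b := by nlinarith
    omega
  have hmono1 : ((X : ℝ[X]) - C (1 - 2 * (a:ℝ))) ^ (b-1) ≠ 0 :=
    ((monic_X_sub_C _).pow _).ne_zero
  have hmono2 : ((X : ℝ[X]) - C 1) ^ (a*b-b) ≠ 0 := ((monic_X_sub_C _).pow _).ne_zero
  have hmono3 : ((X : ℝ[X]) - C ((a:ℝ) * b - 2 * a + 1)) ^ 1 ≠ 0 :=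
    ((monic_X_sub_C _).pow _).ne_zero
  rw [Polynomial.roots_mul (mul_ne_zero (mul_ne_zero hmono1 hmono2) hmono3),
    Polynomial.roots_mul (mul_ne_zero hmono1 hmono2),
    Polynomial.roots_pow, Polynomial.roots_pow, Polynomial.roots_pow,
    Polynomial.roots_X_sub_C, Polynomial.roots_X_sub_C, Polynomial.roots_X_sub_C,
    Multiset.toFinset_add, Multiset.toFinset_add,
    Multiset.toFinset_nsmul _ _ hb1, Multiset.toFinset_nsmul _ _ hab,
    Multiset.toFinset_nsmul _ _ one_ne_zero,
    Multiset.toFinset_singleton, Multiset.toFinset_singleton, Multiset.toFinset_singleton]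
  rw [show ({1 - 2 * (a:ℝ)} : Finset ℝ) ∪ {1} ∪ {(a:ℝ) * b - 2 * a + 1} =
      {1 - 2 * (a:ℝ), 1, (a:ℝ) * b - 2 * a + 1} from by ext x; simp [or_assoc]]
  rw [Finset.card_insert_of_notMem (by simp [h12, h13]),
    Finset.card_insert_of_notMem (by simp [h23]), Finset.card_singleton]


/-- For integers `a ≥ 2`, `b ≥ 3`, the matrix `K(a,b)` is a Seidel matrix of
order `ab` with spectrum `{1−2a with multiplicity b−1, 1 with multiplicity ab−b,
ab−2a+1 with multiplicity 1}`; in particular it has exactly three distinct eigenvalues, and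
consequently Seidel matrices of order `n` with exactly three distinct eigenvalues exist for
every composite order `n = ab` with `a ≥ 2`, `b ≥ 3`. -/
theorem stmt_6 :
    (∀ a b : ℕ, 2 ≤ a → 3 ≤ b →
      IsSeidel (Kab a b) ∧
      (Kab a b).charpoly =
        (X - C (1 - 2 * (a : ℝ))) ^ (b - 1) * (X - C 1) ^ (a * b - b) *
          (X - C ((a : ℝ) * b - 2 * a + 1)) ^ 1 ∧
      (Kab a b).charpoly.roots.toFinset.card = 3) ∧
    (∀ n a b : ℕ, 2 ≤ a → 3 ≤ b → n = a * b →
      ∃ S : Matrix (Fin n) (Fin n) ℝ, IsSeidel S ∧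
        S.charpoly.roots.toFinset.card = 3) := by
  have main : ∀ a b : ℕ, 2 ≤ a → 3 ≤ b →
      IsSeidel (Kab a b) ∧
      (Kab a b).charpoly =
        (X - C (1 - 2 * (a : ℝ))) ^ (b - 1) * (X - C 1) ^ (a * b - b) *
          (X - C ((a : ℝ) * b - 2 * a + 1)) ^ 1 ∧
      (Kab a b).charpoly.roots.toFinset.card = 3 := by
    intro a b ha hb
    refine ⟨kab_seidel a b, kab_charpoly a b ha hb, ?_⟩
    rw [kab_charpoly a b ha hb]
    exact roots_card_three a b ha hb
  refine ⟨main, ?_⟩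
  intro n a b ha hb hn
  subst hn
  refine ⟨Matrix.reindex finProdFinEquiv finProdFinEquiv (Kab a b), ?_, ?_⟩
  · obtain ⟨hs, hd, ho⟩ := kab_seidel a b
    refine ⟨?_, ?_, ?_⟩
    · ext i j
      simp only [Matrix.reindex_apply, Matrix.transpose_apply, Matrix.submatrix_apply]
      exact congrFun (congrFun hs _) _ |>.symm ▸ (Matrix.IsSymm.apply hs _ _)
    · intro i
      simp only [Matrix.reindex_apply, Matrix.submatrix_apply]
      exact hd _
    · intro i j hij
      simp only [Matrix.reindex_apply, Matrix.submatrix_apply]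
      exact ho _ _ (fun h => hij (finProdFinEquiv.symm.injective h))
  · rw [Matrix.charpoly_reindex, kab_charpoly a b ha hb]
    exact roots_card_three a b ha hb
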